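/- Let Σ₁ denote the projective line of ℂ², with each ray written q = ℂ(r, c(r)e^{iθ}) for r ∈ [0,1], c(r) = √(1−r²), θ ∈ [0,2π) (with the conventions ℂ(1,0) and ℂ(0,1) for the poles). Define f by: f(ℂ(r, c(r)e^{iθ})) = ℂ(r², c(r²)e^{iθ}) if θ ∈ [0,π) and r ∉ {0,1}; f(ℂ(r, c(r)e^{iθ})) = ℂ(√(1−c(r)), (1−r²)^{1/4} e^{iθ}) if θ ∈ [π,2π) and r ∉ {0,1}; f(ℂ(1,0)) = ℂ(1,0); f(ℂ(0,1)) = ℂ(0,1). Then f is a bijection of Σ₁ satisfying: (i) f ≠ id; (ii) f⁻¹(p^⊥) = f(p)^⊥ for all p; (iii) f(p) ≠ p^⊥ for all p, where p^⊥ is the unique ray orthogonal to p. -/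

import Mathlib

open Set

/-- For a binary relation `R` on `α` and `a ⊆ α`, the set `a^⊥ = {q : q ⊥ p for all p ∈ a}`. -/
def pol {α : Type*} (R : α → α → Prop) (a : Set α) : Set α := {q | ∀ p ∈ a, R q p}

/-- An orthogonality relation: anti-reflexive, symmetric, singletons biorthogonally closed. -/
def IsOrthRel {α : Type*} (R : α → α → Prop) : Prop :=
  (∀ p, ¬ R p p) ∧ (∀ p q, R p q → R q p) ∧ ∀ p : α, pol R (pol R {p}) = {p}

/-- A p-lattice on `α`: contains `∅`, `univ`, all singletons, closed under arbitrary
intersections. -/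
def IsPLattice {α : Type*} (L : Set (Set α)) : Prop :=
  ∅ ∈ L ∧ Set.univ ∈ L ∧ (∀ S ⊆ L, ⋂₀ S ∈ L) ∧ ∀ p : α, {p} ∈ L

/-- The join (closure) of a subset `s` in a p-lattice `L`: the intersection of all members of
`L` containing `s`. -/
def cl {α : Type*} (L : Set (Set α)) (s : Set α) : Set α := ⋂₀ {c ∈ L | s ⊆ c}

/-- The separated-product relation `#` on `α × β`: `p # q ↔ p₁ ⊥₁ q₁ or p₂ ⊥₂ q₂`. -/
def sharp {α β : Type*} (R1 : α → α → Prop) (R2 : β → β → Prop) :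
    α × β → α × β → Prop := fun p q => R1 p.1 q.1 ∨ R2 p.2 q.2

noncomputable section

open Projectivization

/-- The projective line of `ℂ²`. -/
abbrev PC2 := Projectivization ℂ (EuclideanSpace ℂ (Fin 2))

/-- The usual orthogonality of rays in `ℂ²`. -/
def perp (p q : PC2) : Prop := (inner ℂ p.rep q.rep : ℂ) = 0

/-- `c(r) = √(1 - r²)`. -/
def cc (r : ℝ) : ℝ := Real.sqrt (1 - r ^ 2)

/-- The vector `(r, c(r)·e^{iθ})` of `ℂ²`. -/
def vec (r θ : ℝ) : EuclideanSpace ℂ (Fin 2) :=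
  (WithLp.equiv 2 (Fin 2 → ℂ)).symm ![(r : ℂ), (cc r : ℂ) * Complex.exp (θ * Complex.I)]

namespace S17

lemma cc_nonneg (r : ℝ) : 0 ≤ cc r := Real.sqrt_nonneg _
lemma cc_le_one (r : ℝ) : cc r ≤ 1 := Real.sqrt_le_one.mpr (by nlinarith [sq_nonneg r])
lemma cc_sq {r : ℝ} (h1 : r ≤ 1) (h0 : 0 ≤ r) : cc r ^ 2 = 1 - r ^ 2 :=
  Real.sq_sqrt (by nlinarith)
lemma cc_zero : cc 0 = 1 := by simp [cc]
lemma cc_one : cc 1 = 0 := by simp [cc]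

lemma vec_apply0 (r θ : ℝ) : vec r θ 0 = (r : ℂ) := by simp [vec]
lemma vec_apply1 (r θ : ℝ) : vec r θ 1 = (cc r : ℂ) * Complex.exp (θ * Complex.I) := by
  simp [vec]

lemma vec_ne_zero (r θ : ℝ) : vec r θ ≠ 0 := by
  intro h
  rcases eq_or_ne r 0 with hr | hr
  · have h1 : vec r θ 1 = 0 := by rw [h]; rfl
    rw [vec_apply1, hr, cc_zero] at h1
    simp [Complex.exp_ne_zero] at h1
  · have h0 : vec r θ 0 = 0 := by rw [h]; rfl
    rw [vec_apply0] at h0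
    exact hr (Complex.ofReal_eq_zero.mp h0)

def rrV (v : EuclideanSpace ℂ (Fin 2)) : ℝ := ‖v 0‖ / ‖v‖
def thV (v : EuclideanSpace ℂ (Fin 2)) : ℝ :=
  if (v 1 * (starRingEnd ℂ) (v 0)).arg < 0 then (v 1 * (starRingEnd ℂ) (v 0)).arg + 2 * Real.pi
  else (v 1 * (starRingEnd ℂ) (v 0)).arg
def rr (p : PC2) : ℝ := rrV p.rep
def th (p : PC2) : ℝ := thV p.rep

lemma smul_apply (a : ℂ) (v : EuclideanSpace ℂ (Fin 2)) (i : Fin 2) : (a • v) i = a * v i := rfl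

lemma rrV_smul {a : ℂ} (ha : a ≠ 0) (v : EuclideanSpace ℂ (Fin 2)) : rrV (a • v) = rrV v := by
  have h0 : ‖a‖ ≠ 0 := by simpa using ha
  simp only [rrV, norm_smul, smul_apply, map_mul, norm_mul]
  rw [mul_div_mul_left _ _ h0]

lemma thV_smul {a : ℂ} (ha : a ≠ 0) (v : EuclideanSpace ℂ (Fin 2)) : thV (a • v) = thV v := by
  have key : (a • v) 1 * (starRingEnd ℂ) ((a • v) 0)
      = ((Complex.normSq a : ℝ) : ℂ) * (v 1 * (starRingEnd ℂ) (v 0)) := by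
    simp only [smul_apply, map_mul, ← Complex.mul_conj]
    ring
  unfold thV
  rw [key, Complex.arg_real_mul _ (Complex.normSq_pos.mpr ha)]

lemma rr_mk {v : EuclideanSpace ℂ (Fin 2)} (hv : v ≠ 0) :
    rr (Projectivization.mk ℂ v hv) = rrV v := by
  obtain ⟨a, ha⟩ := (mk_eq_mk_iff ℂ _ _ (rep_nonzero _) hv).mp
    (mk_rep (Projectivization.mk ℂ v hv))
  rw [rr, ← ha, Units.smul_def, rrV_smul a.ne_zero]

lemma th_mk {v : EuclideanSpace ℂ (Fin 2)} (hv : v ≠ 0) :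
    th (Projectivization.mk ℂ v hv) = thV v := by
  obtain ⟨a, ha⟩ := (mk_eq_mk_iff ℂ _ _ (rep_nonzero _) hv).mp
    (mk_rep (Projectivization.mk ℂ v hv))
  rw [th, ← ha, Units.smul_def, thV_smul a.ne_zero]

lemma norm_vec {r : ℝ} (θ : ℝ) (h0 : 0 ≤ r) (h1 : r ≤ 1) : ‖vec r θ‖ = 1 := by
  rw [EuclideanSpace.norm_eq, Fin.sum_univ_two, vec_apply0, vec_apply1]
  simp only [norm_mul, Complex.norm_real, Real.norm_eq_abs, Complex.norm_exp_ofReal_mul_I]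
  rw [abs_of_nonneg h0, abs_of_nonneg (cc_nonneg r), mul_one, cc_sq h1 h0]
  simp

lemma rrV_vec {r : ℝ} (θ : ℝ) (h0 : 0 ≤ r) (h1 : r ≤ 1) : rrV (vec r θ) = r := by
  rw [rrV, norm_vec θ h0 h1, vec_apply0]
  simp [abs_of_nonneg h0]

lemma exp_theta_eq {θ : ℝ} (hθ : Real.pi < θ) :
    Complex.exp ((θ : ℂ) * Complex.I) = Complex.exp (((θ - 2 * Real.pi : ℝ) : ℂ) * Complex.I) := by
  push_cast
  rw [sub_mul, Complex.exp_sub]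
  have : Complex.exp (2 * (Real.pi : ℂ) * Complex.I) = 1 := by
    simpa using Complex.exp_int_mul_two_pi_mul_I 1
  rw [this, div_one]

lemma thV_vec {r θ : ℝ} (h0 : 0 < r) (h1 : r < 1) (ht0 : 0 ≤ θ) (ht1 : θ < 2 * Real.pi) :
    thV (vec r θ) = θ := by
  have hcc : 0 < cc r := Real.sqrt_pos.mpr (by nlinarith)
  have key : vec r θ 1 * (starRingEnd ℂ) (vec r θ 0)
      = ((r * cc r : ℝ) : ℂ) * Complex.exp ((θ : ℂ) * Complex.I) := by
    rw [vec_apply0, vec_apply1, Complex.conj_ofReal]; push_cast; ring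
  unfold thV
  rw [key]
  rcases le_or_gt θ Real.pi with hle | hgt
  · have harg : (((r * cc r : ℝ) : ℂ) * Complex.exp ((θ : ℂ) * Complex.I)).arg = θ := by
      rw [Complex.arg_real_mul _ (by positivity), Complex.exp_mul_I,
        Complex.arg_cos_add_sin_mul_I ⟨by linarith [Real.pi_pos], hle⟩]
    rw [harg, if_neg (by linarith)]
  · have harg : (((r * cc r : ℝ) : ℂ) * Complex.exp ((θ : ℂ) * Complex.I)).arg
        = θ - 2 * Real.pi := by
      rw [Complex.arg_real_mul _ (by positivity), exp_theta_eq hgt, Complex.exp_mul_I,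
        Complex.arg_cos_add_sin_mul_I ⟨by linarith, by linarith [Real.pi_pos]⟩]
    rw [harg, if_pos (by linarith [Real.pi_pos])]
    ring

lemma rrV_nonneg (v : EuclideanSpace ℂ (Fin 2)) : 0 ≤ rrV v := by
  rw [rrV]; positivity

lemma norm_sq_eq (v : EuclideanSpace ℂ (Fin 2)) :
    ‖v‖ ^ 2 = ‖v 0‖ ^ 2 + ‖v 1‖ ^ 2 := by
  rw [EuclideanSpace.norm_eq, Fin.sum_univ_two, Real.sq_sqrt (by positivity)]

lemma abs_le_norm (v : EuclideanSpace ℂ (Fin 2)) : ‖v 0‖ ≤ ‖v‖ := by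
  have h := norm_sq_eq v
  have hn : 0 ≤ ‖v‖ := norm_nonneg v
  nlinarith [norm_nonneg (v 0), norm_nonneg (v 1)]

lemma rrV_le_one (v : EuclideanSpace ℂ (Fin 2)) : rrV v ≤ 1 := by
  rw [rrV]
  rcases eq_or_lt_of_le (norm_nonneg v) with h | h
  · simp [← h]
  · rw [div_le_one h]; exact abs_le_norm v

lemma thV_nonneg (v : EuclideanSpace ℂ (Fin 2)) : 0 ≤ thV v := by
  rw [thV]
  split_ifs with h
  · nlinarith [Complex.neg_pi_lt_arg (v 1 * (starRingEnd ℂ) (v 0)), Real.pi_pos]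
  · linarith

lemma thV_lt_two_pi (v : EuclideanSpace ℂ (Fin 2)) : thV v < 2 * Real.pi := by
  rw [thV]
  split_ifs with h
  · linarith
  · nlinarith [Complex.arg_le_pi (v 1 * (starRingEnd ℂ) (v 0)), Real.pi_pos]

lemma reconstruct {v : EuclideanSpace ℂ (Fin 2)} (hv : v ≠ 0) :
    Projectivization.mk ℂ (vec (rrV v) (thV v)) (vec_ne_zero _ _)
      = Projectivization.mk ℂ v hv := by
  rw [mk_eq_mk_iff]
  have hn : 0 < ‖v‖ := norm_pos_iff.mpr hv
  rcases eq_or_ne (v 0) 0 with h0 | h0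
  · have hr : rrV v = 0 := by simp [rrV, h0]
    have hth : thV v = 0 := by simp [thV, h0]
    have h1 : v 1 ≠ 0 := by
      intro h1
      apply hv
      ext i
      fin_cases i
      · exact h0
      · exact h1
    refine ⟨Units.mk0 ((v 1)⁻¹) (inv_ne_zero h1), ?_⟩
    rw [hr, hth, Units.smul_def, Units.val_mk0]
    ext i
    fin_cases i
    · show (v 1)⁻¹ * v 0 = vec 0 0 0
      rw [vec_apply0, h0, mul_zero, Complex.ofReal_zero]
    · show (v 1)⁻¹ * v 1 = vec 0 0 1
      rw [vec_apply1, cc_zero]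
      simp [inv_mul_cancel₀ h1]
  · have habs : (0:ℝ) < ‖v 0‖ := by
      simpa using norm_pos_iff.mpr h0
    have hA : ((‖v 0‖ : ℝ) : ℂ) ≠ 0 := by exact_mod_cast habs.ne'
    have hN : ((‖v‖ : ℝ) : ℂ) ≠ 0 := by exact_mod_cast hn.ne'
    have ha : (starRingEnd ℂ) (v 0) / (((‖v 0‖ : ℝ) : ℂ) * ((‖v‖ : ℝ) : ℂ)) ≠ 0 :=
      div_ne_zero (by simpa using h0) (mul_ne_zero hA hN)
    refine ⟨Units.mk0 _ ha, ?_⟩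
    · have key0 : (starRingEnd ℂ) (v 0) * v 0 = ((‖v 0‖ : ℝ) : ℂ)^2 := by
        rw [mul_comm, Complex.mul_conj, Complex.normSq_eq_norm_sq]
        push_cast; ring
      have hz' : ((‖v 1‖ : ℝ) : ℂ) * ((‖v 0‖ : ℝ) : ℂ) *
          Complex.exp (((v 1 * (starRingEnd ℂ) (v 0)).arg : ℂ) * Complex.I)
          = v 1 * (starRingEnd ℂ) (v 0) := by
        have h := Complex.norm_mul_exp_arg_mul_I (v 1 * (starRingEnd ℂ) (v 0))
        rw [norm_mul, Complex.norm_conj] at h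
        push_cast at h
        exact h
      have hexp : Complex.exp ((thV v : ℂ) * Complex.I)
          = Complex.exp (((v 1 * (starRingEnd ℂ) (v 0)).arg : ℂ) * Complex.I) := by
        unfold thV
        split_ifs with h
        · push_cast
          rw [add_mul, Complex.exp_add]
          have h2 : Complex.exp (2 * (Real.pi:ℂ) * Complex.I) = 1 := by
            simpa using Complex.exp_int_mul_two_pi_mul_I 1
          rw [h2, mul_one]
        · rfl
      have hcc : ((cc (rrV v) : ℝ) : ℂ) = ((‖v 1‖ / ‖v‖ : ℝ) : ℂ) := by
        norm_cast
        have hsq : 1 - (rrV v)^2 = (‖v 1‖ / ‖v‖)^2 := by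
          rw [rrV]
          field_simp
          nlinarith [norm_sq_eq v]
        rw [cc, hsq, Real.sqrt_sq (by positivity)]
      rw [Units.smul_def, Units.val_mk0]
      ext i
      fin_cases i
      · show (starRingEnd ℂ) (v 0) / (((‖v 0‖ : ℝ) : ℂ) * ((‖v‖ : ℝ) : ℂ)) * v 0
          = vec (rrV v) (thV v) 0
        rw [vec_apply0, rrV]
        push_cast
        rw [div_mul_eq_mul_div, div_eq_div_iff (mul_ne_zero hA hN) hN]
        linear_combination ((‖v‖ : ℝ) : ℂ) * key0
      · show (starRingEnd ℂ) (v 0) / (((‖v 0‖ : ℝ) : ℂ) * ((‖v‖ : ℝ) : ℂ)) * v 1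
          = vec (rrV v) (thV v) 1
        rw [vec_apply1, hcc, hexp]
        push_cast
        rw [div_mul_eq_mul_div, div_mul_eq_mul_div,
          div_eq_div_iff (mul_ne_zero hA hN) hN]
        linear_combination (-1) * ((‖v‖ : ℝ) : ℂ) * hz'

lemma reconstructP (p : PC2) :
    Projectivization.mk ℂ (vec (rr p) (th p)) (vec_ne_zero _ _) = p := by
  conv_rhs => rw [← mk_rep p]
  exact reconstruct (rep_nonzero p)

lemma rr_nonneg (p : PC2) : 0 ≤ rr p := rrV_nonneg _
lemma rr_le_one (p : PC2) : rr p ≤ 1 := rrV_le_one _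
lemma th_nonneg (p : PC2) : 0 ≤ th p := thV_nonneg _
lemma th_lt_two_pi (p : PC2) : th p < 2 * Real.pi := thV_lt_two_pi _

lemma inner_vec (s φ r θ : ℝ) :
    (inner ℂ (vec s φ) (vec r θ) : ℂ) =
      ((s * r : ℝ) : ℂ) + ((cc s * cc r : ℝ) : ℂ) * Complex.exp ((θ - φ : ℝ) * Complex.I) := by
  rw [PiLp.inner_apply, Fin.sum_univ_two, vec_apply0, vec_apply0, vec_apply1, vec_apply1]
  simp only [RCLike.inner_apply, map_mul, Complex.conj_ofReal]
  rw [← Complex.exp_conj]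
  have : (starRingEnd ℂ) ((φ : ℂ) * Complex.I) = -(φ : ℂ) * Complex.I := by
    simp [Complex.conj_I]
  rw [this]
  push_cast
  rw [mul_assoc, mul_comm (Complex.exp _), mul_assoc, ← Complex.exp_add]
  ring_nf

lemma perp_mk {v w : EuclideanSpace ℂ (Fin 2)} (hv : v ≠ 0) (hw : w ≠ 0) :
    perp (Projectivization.mk ℂ v hv) (Projectivization.mk ℂ w hw) ↔ (inner ℂ v w : ℂ) = 0 := by
  obtain ⟨a, ha⟩ := (mk_eq_mk_iff ℂ _ _ (rep_nonzero _) hv).mp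
    (mk_rep (Projectivization.mk ℂ v hv))
  obtain ⟨b, hb⟩ := (mk_eq_mk_iff ℂ _ _ (rep_nonzero _) hw).mp
    (mk_rep (Projectivization.mk ℂ w hw))
  rw [perp, ← ha, ← hb, Units.smul_def, Units.smul_def, inner_smul_left, inner_smul_right]
  constructor
  · intro h
    rcases mul_eq_zero.mp h with h | h
    · exact absurd h (by simpa using a.ne_zero)
    · rcases mul_eq_zero.mp h with h | h
      · exact absurd h b.ne_zero
      · exact h
  · intro h; rw [h]; ring

lemma exp_eq_neg_one_iff {ψ : ℝ} (h1 : -(2 * Real.pi) < ψ) (h2 : ψ < 2 * Real.pi) :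
    Complex.exp ((ψ : ℂ) * Complex.I) = -1 ↔ |ψ| = Real.pi := by
  have hpi := Real.pi_pos
  constructor
  · intro h
    have h3 : Complex.exp (((ψ - Real.pi : ℝ) : ℂ) * Complex.I) = 1 := by
      push_cast
      rw [sub_mul, Complex.exp_sub, h, Complex.exp_pi_mul_I]
      norm_num
    rw [Complex.exp_eq_one_iff] at h3
    obtain ⟨n, hn⟩ := h3
    have hre : ψ - Real.pi = (n : ℝ) * (2 * Real.pi) := by
      have hn' : ((ψ - Real.pi : ℝ) : ℂ) * Complex.I
          = (((n : ℝ) * (2 * Real.pi) : ℝ) : ℂ) * Complex.I := by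
        rw [hn]; push_cast; ring
      have := mul_right_cancel₀ Complex.I_ne_zero hn'
      exact_mod_cast this
    have hn1 : (n : ℝ) < 1 := by nlinarith
    have hn2 : (-2 : ℝ) < n := by nlinarith
    have hn1' : n < 1 := by exact_mod_cast hn1
    have hn2' : (-2 : ℤ) < n := by exact_mod_cast hn2
    interval_cases n
    · rw [abs_of_nonpos (by push_cast at hre ⊢; nlinarith)]
      push_cast at hre
      nlinarith
    · rw [abs_of_nonneg (by push_cast at hre ⊢; nlinarith)]
      push_cast at hre
      nlinarith
  · intro h
    rcases abs_eq (le_of_lt hpi) |>.mp h with h | h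
    · rw [h, Complex.exp_pi_mul_I]
    · rw [h]
      push_cast
      rw [neg_mul, Complex.exp_neg, Complex.exp_pi_mul_I]
      norm_num

lemma perp_char {r s θ φ : ℝ} (hr0 : 0 ≤ r) (hr1 : r ≤ 1) (hs0 : 0 ≤ s) (hs1 : s ≤ 1)
    (hθ0 : 0 ≤ θ) (hθ1 : θ < 2 * Real.pi) (hφ0 : 0 ≤ φ) (hφ1 : φ < 2 * Real.pi) :
    (inner ℂ (vec s φ) (vec r θ) : ℂ) = 0 ↔
      (s ^ 2 = 1 - r ^ 2 ∧ (s * r = 0 ∨ |θ - φ| = Real.pi)) := by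
  rw [inner_vec]
  have ha : 0 ≤ s * r := mul_nonneg hs0 hr0
  have hb : 0 ≤ cc s * cc r := mul_nonneg (cc_nonneg s) (cc_nonneg r)
  have hsub1 : -(2 * Real.pi) < θ - φ := by linarith
  have hsub2 : θ - φ < 2 * Real.pi := by linarith
  have habsE : ‖Complex.exp (((θ - φ : ℝ) : ℂ) * Complex.I)‖ = 1 :=
    Complex.norm_exp_ofReal_mul_I _
  constructor
  · intro h
    have hba : ((cc s * cc r : ℝ) : ℂ) * Complex.exp (((θ - φ : ℝ) : ℂ) * Complex.I)
        = -((s * r : ℝ) : ℂ) := by linear_combination h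
    have hab : cc s * cc r = s * r := by
      have := congrArg norm hba
      rw [norm_mul, habsE, mul_one, Complex.norm_real, Real.norm_eq_abs, norm_neg, Complex.norm_real, Real.norm_eq_abs,
        abs_of_nonneg hb, abs_of_nonneg ha] at this
      exact this
    have hsq : s ^ 2 = 1 - r ^ 2 := by
      have h2 : (cc s * cc r) ^ 2 = (s * r) ^ 2 := by rw [hab]
      rw [mul_pow, mul_pow, cc_sq hs1 hs0, cc_sq hr1 hr0] at h2
      nlinarith
    refine ⟨hsq, ?_⟩
    have h2 : ((s * r : ℝ) : ℂ) * (1 + Complex.exp (((θ - φ : ℝ) : ℂ) * Complex.I)) = 0 := by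
      have : ((cc s * cc r : ℝ) : ℂ) = ((s * r : ℝ) : ℂ) := by exact_mod_cast hab
      rw [this] at h
      linear_combination h
    rcases mul_eq_zero.mp h2 with h3 | h3
    · left; exact_mod_cast h3
    · right
      have hE : Complex.exp (((θ - φ : ℝ) : ℂ) * Complex.I) = -1 := by linear_combination h3
      exact (exp_eq_neg_one_iff hsub1 hsub2).mp hE
  · rintro ⟨h1, h2⟩
    have hab : cc s * cc r = s * r := by
      have h3 : (cc s * cc r) ^ 2 = (s * r) ^ 2 := by
        rw [mul_pow, mul_pow, cc_sq hs1 hs0, cc_sq hr1 hr0]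
        nlinarith
      nlinarith
    rcases h2 with h2 | h2
    · rw [hab, h2]
      simp
    · rw [hab, (exp_eq_neg_one_iff hsub1 hsub2).mpr h2]
      push_cast
      ring

lemma perp_vec_iff {r s θ φ : ℝ} (hr0 : 0 ≤ r) (hr1 : r ≤ 1) (hs0 : 0 ≤ s) (hs1 : s ≤ 1)
    (hθ0 : 0 ≤ θ) (hθ1 : θ < 2 * Real.pi) (hφ0 : 0 ≤ φ) (hφ1 : φ < 2 * Real.pi) :
    perp (Projectivization.mk ℂ (vec s φ) (vec_ne_zero _ _))
        (Projectivization.mk ℂ (vec r θ) (vec_ne_zero _ _)) ↔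
      (s ^ 2 = 1 - r ^ 2 ∧ (s * r = 0 ∨ |θ - φ| = Real.pi)) :=
  (perp_mk _ _).trans (perp_char hr0 hr1 hs0 hs1 hθ0 hθ1 hφ0 hφ1)

/-! the branch maps -/

def F (x ψ : ℝ) : ℝ := if ψ < Real.pi then x ^ 2 else Real.sqrt (1 - cc x)
def G (x ψ : ℝ) : ℝ := if ψ < Real.pi then Real.sqrt x else Real.sqrt (1 - (1 - x ^ 2) ^ 2)

lemma F_nonneg {x : ℝ} (hx : 0 ≤ x) (ψ : ℝ) : 0 ≤ F x ψ := by
  rw [F]; split_ifs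
  · positivity
  · exact Real.sqrt_nonneg _

lemma F_le_one {x : ℝ} (hx0 : 0 ≤ x) (hx1 : x ≤ 1) (ψ : ℝ) : F x ψ ≤ 1 := by
  rw [F]; split_ifs
  · nlinarith
  · exact Real.sqrt_le_one.mpr (by linarith [cc_nonneg x])

lemma F_zero (ψ : ℝ) : F 0 ψ = 0 := by
  rw [F]; split_ifs
  · norm_num
  · rw [cc_zero]; simp

lemma F_one (ψ : ℝ) : F 1 ψ = 1 := by
  rw [F]; split_ifs
  · norm_num
  · rw [cc_one]; simp

lemma F_eq_zero_iff {x : ℝ} (hx0 : 0 ≤ x) (hx1 : x ≤ 1) (ψ : ℝ) : F x ψ = 0 ↔ x = 0 := by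
  constructor
  · intro h
    rw [F] at h
    split_ifs at h with hψ
    · nlinarith
    · have h2 : 1 - cc x ≤ 0 := Real.sqrt_eq_zero'.mp h
      have h3 : 1 ≤ cc x := by linarith
      have h4 : cc x ^ 2 = 1 - x ^ 2 := cc_sq hx1 hx0
      nlinarith [cc_le_one x]
  · rintro rfl; exact F_zero ψ

lemma F_eq_one_iff {x : ℝ} (hx0 : 0 ≤ x) (hx1 : x ≤ 1) (ψ : ℝ) : F x ψ = 1 ↔ x = 1 := by
  constructor
  · intro h
    rw [F] at h
    split_ifs at h with hψ
    · nlinarith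
    · have h2 : 1 - cc x = 1 := by
        have h5 := Real.sq_sqrt (by linarith [cc_le_one x] : (0:ℝ) ≤ 1 - cc x)
        rw [h] at h5
        linarith
      have h3 : cc x = 0 := by linarith
      have h4 : cc x ^ 2 = 1 - x ^ 2 := cc_sq hx1 hx0
      nlinarith
  · rintro rfl; exact F_one ψ

lemma G_F {x : ℝ} (hx0 : 0 ≤ x) (hx1 : x ≤ 1) (ψ : ℝ) : G (F x ψ) ψ = x := by
  rw [F, G]
  split_ifs with hψ
  · exact Real.sqrt_sq hx0
  · have h1 : (0:ℝ) ≤ 1 - cc x := by linarith [cc_le_one x]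
    rw [Real.sq_sqrt h1]
    have h2 : 1 - (1 - (1 - cc x)) ^ 2 = 1 - cc x ^ 2 := by ring
    rw [h2, cc_sq hx1 hx0]
    rw [show (1 : ℝ) - (1 - x ^ 2) = x ^ 2 by ring]
    exact Real.sqrt_sq hx0

lemma F_G {x : ℝ} (hx0 : 0 ≤ x) (hx1 : x ≤ 1) (ψ : ℝ) : F (G x ψ) ψ = x := by
  rw [F, G]
  split_ifs with hψ
  · exact Real.sq_sqrt hx0
  · have hx2 : (0:ℝ) ≤ 1 - x ^ 2 := by nlinarith
    have hx3 : (1 - x ^ 2) ^ 2 ≤ 1 := by nlinarith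
    have h1 : (0:ℝ) ≤ 1 - (1 - x ^ 2) ^ 2 := by linarith
    have h2 : cc (Real.sqrt (1 - (1 - x ^ 2) ^ 2)) = 1 - x ^ 2 := by
      rw [cc, Real.sq_sqrt h1]
      rw [show (1:ℝ) - (1 - (1 - x ^ 2) ^ 2) = (1 - x ^ 2) ^ 2 by ring]
      exact Real.sqrt_sq (by nlinarith)
    rw [h2, show (1:ℝ) - (1 - x ^ 2) = x ^ 2 by ring]
    exact Real.sqrt_sq hx0

def ff (p : PC2) : PC2 :=
  Projectivization.mk ℂ (vec (F (rr p) (th p)) (th p)) (vec_ne_zero _ _)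
def gg (p : PC2) : PC2 :=
  Projectivization.mk ℂ (vec (G (rr p) (th p)) (th p)) (vec_ne_zero _ _)

lemma mk_congr {v w : EuclideanSpace ℂ (Fin 2)} (h : v = w) {hv : v ≠ 0} {hw : w ≠ 0} :
    Projectivization.mk ℂ v hv = Projectivization.mk ℂ w hw := by subst h; rfl

lemma mk_vec_congr {r r' θ θ' : ℝ} (h : r = r') (h2 : θ = θ') {hv : vec r θ ≠ 0}
    {hw : vec r' θ' ≠ 0} :
    Projectivization.mk ℂ (vec r θ) hv = Projectivization.mk ℂ (vec r' θ') hw := by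
  subst h; subst h2; rfl

lemma F_pole {x : ℝ} (hx : x = 0 ∨ x = 1) (ψ : ℝ) : F x ψ = x := by
  rcases hx with rfl | rfl
  · exact F_zero ψ
  · exact F_one ψ

lemma G_pole {x : ℝ} (hx : x = 0 ∨ x = 1) (ψ : ℝ) : G x ψ = x := by
  rcases hx with rfl | rfl
  · rw [G]; split_ifs <;> simp
  · rw [G]; split_ifs <;> norm_num

lemma ff_pole {p : PC2} (hp : rr p = 0 ∨ rr p = 1) : ff p = p :=
  (mk_vec_congr (F_pole hp (th p)) rfl).trans (reconstructP p)

lemma gg_pole {p : PC2} (hp : rr p = 0 ∨ rr p = 1) : gg p = p :=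
  (mk_vec_congr (G_pole hp (th p)) rfl).trans (reconstructP p)

lemma F_pos {x : ℝ} (hx0 : 0 < x) (hx1 : x < 1) (ψ : ℝ) : 0 < F x ψ := by
  rcases lt_or_eq_of_le (F_nonneg hx0.le ψ) with h | h
  · exact h
  · exact absurd ((F_eq_zero_iff hx0.le hx1.le ψ).mp h.symm) hx0.ne'

lemma F_lt_one {x : ℝ} (hx0 : 0 < x) (hx1 : x < 1) (ψ : ℝ) : F x ψ < 1 := by
  rcases lt_or_eq_of_le (F_le_one hx0.le hx1.le ψ) with h | h
  · exact h
  · exact absurd ((F_eq_one_iff hx0.le hx1.le ψ).mp h) hx1.ne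

lemma gg_ff (p : PC2) : gg (ff p) = p := by
  rcases eq_or_lt_of_le (rr_nonneg p) with h0 | h0
  · rw [ff_pole (Or.inl h0.symm), gg_pole (Or.inl h0.symm)]
  rcases eq_or_lt_of_le (rr_le_one p) with h1 | h1
  · rw [ff_pole (Or.inr h1), gg_pole (Or.inr h1)]
  have hF0 := F_pos h0 h1 (th p)
  have hF1 := F_lt_one h0 h1 (th p)
  have hrr : rr (ff p) = F (rr p) (th p) := by
    rw [ff, rr_mk, rrV_vec _ (F_nonneg h0.le _) (F_le_one h0.le h1.le _)]
  have hth : th (ff p) = th p := by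
    rw [ff, th_mk, thV_vec hF0 hF1 (th_nonneg p) (th_lt_two_pi p)]
  exact (mk_vec_congr (by rw [hrr, hth, G_F h0.le h1.le]) hth).trans (reconstructP p)

lemma G_pos {x : ℝ} (hx0 : 0 < x) (hx1 : x < 1) (ψ : ℝ) : 0 < G x ψ := by
  rw [G]; split_ifs
  · exact Real.sqrt_pos.mpr hx0
  · refine Real.sqrt_pos.mpr ?_
    have hx2 : (0:ℝ) < 1 - x ^ 2 := by nlinarith
    have hx3 : 1 - x ^ 2 < 1 := by nlinarith
    nlinarith

lemma G_nonneg (x ψ : ℝ) : 0 ≤ G x ψ := by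
  rw [G]; split_ifs <;> exact Real.sqrt_nonneg _

lemma G_le_one {x : ℝ} (hx0 : 0 ≤ x) (hx1 : x ≤ 1) (ψ : ℝ) : G x ψ ≤ 1 := by
  rw [G]; split_ifs
  · exact Real.sqrt_le_one.mpr hx1
  · refine Real.sqrt_le_one.mpr ?_
    nlinarith [sq_nonneg (1 - x ^ 2)]

lemma G_lt_one {x : ℝ} (hx0 : 0 < x) (hx1 : x < 1) (ψ : ℝ) : G x ψ < 1 := by
  rcases lt_or_eq_of_le (G_le_one hx0.le hx1.le ψ) with h | h
  · exact h
  · exfalso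
    have := F_G hx0.le hx1.le ψ
    rw [h, F_one] at this
    exact hx1.ne this.symm

lemma ff_gg (p : PC2) : ff (gg p) = p := by
  rcases eq_or_lt_of_le (rr_nonneg p) with h0 | h0
  · rw [gg_pole (Or.inl h0.symm), ff_pole (Or.inl h0.symm)]
  rcases eq_or_lt_of_le (rr_le_one p) with h1 | h1
  · rw [gg_pole (Or.inr h1), ff_pole (Or.inr h1)]
  have hG0 := G_pos h0 h1 (th p)
  have hG1 := G_lt_one h0 h1 (th p)
  have hrr : rr (gg p) = G (rr p) (th p) := by
    rw [gg, rr_mk, rrV_vec _ (G_nonneg _ _) (G_le_one h0.le h1.le _)]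
  have hth : th (gg p) = th p := by
    rw [gg, th_mk, thV_vec hG0 hG1 (th_nonneg p) (th_lt_two_pi p)]
  exact (mk_vec_congr (by rw [hrr, hth, F_G h0.le h1.le]) hth).trans (reconstructP p)

set_option maxHeartbeats 1000000 in
lemma key_equiv {r s θ φ : ℝ} (hr0 : 0 ≤ r) (hr1 : r ≤ 1) (hs0 : 0 ≤ s) (hs1 : s ≤ 1)
    (hθ0 : 0 ≤ θ) (hθ1 : θ < 2 * Real.pi) (hφ0 : 0 ≤ φ) (hφ1 : φ < 2 * Real.pi) :
    ((F s φ) ^ 2 = 1 - r ^ 2 ∧ (F s φ * r = 0 ∨ |θ - φ| = Real.pi)) ↔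
    (s ^ 2 = 1 - (F r θ) ^ 2 ∧ (s * F r θ = 0 ∨ |θ - φ| = Real.pi)) := by
  have hpi := Real.pi_pos
  by_cases hP : |θ - φ| = Real.pi
  · simp only [hP, or_true, and_true]
    by_cases hθ : θ < Real.pi <;> by_cases hφ' : φ < Real.pi
    · exfalso
      rcases abs_cases (θ - φ) with ⟨h, _⟩ | ⟨h, _⟩ <;> rw [h] at hP <;> linarith
    · -- θ < π ≤ φ : F s φ = √(1 - cc s), F r θ = r²
      rw [F, if_neg hφ', F, if_pos hθ]
      rw [Real.sq_sqrt (by linarith [cc_le_one s])]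
      have hccs : cc s ^ 2 = 1 - s ^ 2 := cc_sq hs1 hs0
      constructor
      · intro h
        have h2 : cc s = r ^ 2 := by linarith
        nlinarith [cc_nonneg s]
      · intro h
        have h2 : cc s = r ^ 2 := by
          have h3 : cc s ^ 2 = (r ^ 2) ^ 2 := by nlinarith
          nlinarith [cc_nonneg s, sq_nonneg r]
        linarith
    · -- φ < π ≤ θ : F s φ = s², F r θ = √(1 - cc r)
      rw [F, if_pos hφ', F, if_neg hθ]
      rw [Real.sq_sqrt (by linarith [cc_le_one r])]
      have hccr : cc r ^ 2 = 1 - r ^ 2 := cc_sq hr1 hr0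
      constructor
      · intro h
        have h2 : s ^ 2 = cc r := by
          have h3 : (s ^ 2) ^ 2 = cc r ^ 2 := by nlinarith
          nlinarith [cc_nonneg r, sq_nonneg s]
        linarith
      · intro h
        have h2 : s ^ 2 = cc r := by linarith
        nlinarith [cc_nonneg r]
    · exfalso
      push_neg at hθ hφ'
      rcases abs_cases (θ - φ) with ⟨h, _⟩ | ⟨h, _⟩ <;> rw [h] at hP <;> linarith
  · simp only [hP, or_false]
    have hF0s := F_eq_zero_iff hs0 hs1 φ
    have hF1s := F_eq_one_iff hs0 hs1 φ
    have hF0r := F_eq_zero_iff hr0 hr1 θ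
    have hF1r := F_eq_one_iff hr0 hr1 θ
    have hFs0 := F_nonneg hs0 φ
    have hFs1 := F_le_one hs0 hs1 φ
    have hFr0 := F_nonneg hr0 θ
    have hFr1 := F_le_one hr0 hr1 θ
    constructor
    · rintro ⟨h1, h2⟩
      rcases mul_eq_zero.mp h2 with h | h
      · have hs' : s = 0 := hF0s.mp h
        have hsq : 1 - r ^ 2 = 0 := by rw [h] at h1; linarith
        have hr' : r = 1 := by nlinarith
        subst hs'; subst hr'
        rw [F_one]
        norm_num
      · subst h
        have hsq : F s φ ^ 2 = 1 := by linarith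
        have hFs' : F s φ = 1 := by nlinarith
        have hs' : s = 1 := hF1s.mp hFs'
        subst hs'
        rw [F_zero]
        norm_num
    · rintro ⟨h1, h2⟩
      rcases mul_eq_zero.mp h2 with h | h
      · subst h
        have hsq : F r θ ^ 2 = 1 := by linarith
        have hFr' : F r θ = 1 := by nlinarith
        have hr' : r = 1 := hF1r.mp hFr'
        subst hr'
        rw [F_zero]
        norm_num
      · have hr' : r = 0 := hF0r.mp h
        have hsq : s ^ 2 = 1 := by rw [h] at h1; linarith
        have hs' : s = 1 := by nlinarith
        subst hr'; subst hs'
        rw [F_one]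
        norm_num

lemma canonical (p : PC2) : ∃ r θ : ℝ, 0 ≤ r ∧ r ≤ 1 ∧ 0 ≤ θ ∧ θ < 2 * Real.pi ∧
    ff p = Projectivization.mk ℂ (vec (F r θ) θ) (vec_ne_zero _ _) ∧
    p = Projectivization.mk ℂ (vec r θ) (vec_ne_zero _ _) :=
  ⟨rr p, th p, rr_nonneg p, rr_le_one p, th_nonneg p, th_lt_two_pi p, rfl,
    (reconstructP p).symm⟩

end S17

open S17

/-- the explicitly defined map `f` on the projective line of `ℂ²` is a
bijection satisfying (i) `f ≠ id`, (ii) `f⁻¹(p^⊥) = f(p)^⊥`, (iii) `f(p) ≠ p^⊥`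
(equivalently, `f p` is never orthogonal to `p`). -/
theorem stmt17 : ∃ f : PC2 → PC2,
    Function.Bijective f ∧
    -- first branch: `θ ∈ [0,π)`, `r ∉ {0,1}`
    (∀ (r θ : ℝ) (_ : 0 < r) (_ : r < 1) (_ : 0 ≤ θ) (_ : θ < Real.pi)
        (hv : vec r θ ≠ 0) (hv' : vec (r ^ 2) θ ≠ 0),
      f (Projectivization.mk ℂ (vec r θ) hv) = Projectivization.mk ℂ (vec (r ^ 2) θ) hv') ∧
    -- second branch: `θ ∈ [π,2π)`, `r ∉ {0,1}`;
    -- note `ℂ(√(1-c r), (1-r²)^{1/4}e^{iθ}) = ℂ(√(1-c r), c(√(1-c r))e^{iθ})`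
    (∀ (r θ : ℝ) (_ : 0 < r) (_ : r < 1) (_ : Real.pi ≤ θ) (_ : θ < 2 * Real.pi)
        (hv : vec r θ ≠ 0)
        (hv' : ((WithLp.equiv 2 (Fin 2 → ℂ)).symm
          ![(Real.sqrt (1 - cc r) : ℂ),
            (((1 - r ^ 2) ^ ((1 : ℝ) / 4) : ℝ) : ℂ) * Complex.exp (θ * Complex.I)] :
              EuclideanSpace ℂ (Fin 2)) ≠ 0),
      f (Projectivization.mk ℂ (vec r θ) hv) =
        Projectivization.mk ℂ ((WithLp.equiv 2 (Fin 2 → ℂ)).symm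
          ![(Real.sqrt (1 - cc r) : ℂ),
            (((1 - r ^ 2) ^ ((1 : ℝ) / 4) : ℝ) : ℂ) * Complex.exp (θ * Complex.I)]) hv') ∧
    -- the poles `ℂ(1,0)` and `ℂ(0,1)` are fixed
    (∀ hv : vec 1 0 ≠ 0,
      f (Projectivization.mk ℂ (vec 1 0) hv) = Projectivization.mk ℂ (vec 1 0) hv) ∧
    (∀ hv : vec 0 0 ≠ 0,
      f (Projectivization.mk ℂ (vec 0 0) hv) = Projectivization.mk ℂ (vec 0 0) hv) ∧
    -- (i)
    f ≠ id ∧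
    -- (ii)
    (∀ p : PC2, f ⁻¹' (pol perp {p}) = pol perp {f p}) ∧
    -- (iii)
    (∀ p : PC2, ¬ perp p (f p)) := by
  have hpi := Real.pi_pos
  refine ⟨ff, ?_, ?_, ?_, ?_, ?_, ?_, ?_, ?_⟩
  · exact Function.bijective_iff_has_inverse.mpr ⟨gg, gg_ff, ff_gg⟩
  · -- branch 1
    intro r θ hr0 hr1 hθ0 hθ1 hv hv'
    have hrr : rr (Projectivization.mk ℂ (vec r θ) hv) = r := by
      rw [rr_mk, rrV_vec θ hr0.le hr1.le]
    have hth : th (Projectivization.mk ℂ (vec r θ) hv) = θ := by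
      rw [th_mk, thV_vec hr0 hr1 hθ0 (by linarith)]
    exact mk_vec_congr (by rw [hrr, hth, F, if_pos hθ1]) hth
  · -- branch 2
    intro r θ hr0 hr1 hθ0 hθ1 hv hv'
    have hrr : rr (Projectivization.mk ℂ (vec r θ) hv) = r := by
      rw [rr_mk, rrV_vec θ hr0.le hr1.le]
    have hth : th (Projectivization.mk ℂ (vec r θ) hv) = θ := by
      rw [th_mk, thV_vec hr0 hr1 (by linarith) hθ1]
    have hvec : vec (Real.sqrt (1 - cc r)) θ = (WithLp.equiv 2 (Fin 2 → ℂ)).symm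
        ![(Real.sqrt (1 - cc r) : ℂ),
          (((1 - r ^ 2) ^ ((1 : ℝ) / 4) : ℝ) : ℂ) * Complex.exp (θ * Complex.I)] := by
      have hc : cc (Real.sqrt (1 - cc r)) = (1 - r ^ 2) ^ ((1 : ℝ) / 4) := by
        rw [cc, Real.sq_sqrt (by linarith [cc_le_one r] : (0:ℝ) ≤ 1 - cc r)]
        rw [show (1:ℝ) - (1 - cc r) = cc r by ring, cc]
        rw [Real.sqrt_eq_rpow, Real.sqrt_eq_rpow,
          ← Real.rpow_mul (by nlinarith : (0:ℝ) ≤ 1 - r ^ 2)]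
        norm_num
      ext i
      fin_cases i
      · show vec (Real.sqrt (1 - cc r)) θ 0 = _
        rw [vec_apply0]
        simp
      · show vec (Real.sqrt (1 - cc r)) θ 1 = _
        rw [vec_apply1, hc]
        simp
    exact (mk_vec_congr (hw := vec_ne_zero _ _)
      (by rw [hrr, hth, F, if_neg (not_lt.mpr hθ0)]) hth).trans (mk_congr hvec)
  · -- pole (1,0)
    intro hv
    have hrr : rr (Projectivization.mk ℂ (vec 1 0) hv) = 1 := by
      rw [rr_mk, rrV_vec 0 zero_le_one le_rfl]
    have := ff_pole (p := Projectivization.mk ℂ (vec 1 0) hv) (Or.inr hrr)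
    exact this
  · -- pole (0,1)
    intro hv
    have hrr : rr (Projectivization.mk ℂ (vec 0 0) hv) = 0 := by
      rw [rr_mk, rrV_vec 0 le_rfl zero_le_one]
    exact ff_pole (Or.inl hrr)
  · -- f ≠ id
    intro hid
    have hrr : rr (Projectivization.mk ℂ (vec (1/2) 0) (vec_ne_zero _ _)) = 1/2 := by
      rw [rr_mk, rrV_vec 0 (by norm_num) (by norm_num)]
    have hth : th (Projectivization.mk ℂ (vec (1/2) 0) (vec_ne_zero _ _)) = 0 := by
      rw [th_mk, thV_vec (by norm_num) (by norm_num) le_rfl (by linarith)]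
    have h1 : ff (Projectivization.mk ℂ (vec (1/2) 0) (vec_ne_zero _ _))
        = Projectivization.mk ℂ (vec ((1/2 : ℝ)^2) 0) (vec_ne_zero _ _) :=
      mk_vec_congr (by rw [hrr, hth, F, if_pos hpi]) hth
    rw [hid, id_eq] at h1
    have h2 := congrArg rr h1
    rw [hrr, rr_mk, rrV_vec 0 (by norm_num) (by norm_num)] at h2
    norm_num at h2
  · -- (ii)
    intro p
    ext q
    obtain ⟨r, θ, hr0, hr1, hθ0, hθ1, hfp, hp⟩ := canonical p
    obtain ⟨s, φ, hs0, hs1, hφ0, hφ1, hfq, hq⟩ := canonical q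
    simp only [Set.mem_preimage, pol, Set.mem_setOf_eq, Set.mem_singleton_iff, forall_eq]
    rw [hfq, hfp]
    conv_lhs => rw [hp]
    conv_rhs => rw [hq]
    rw [perp_vec_iff hr0 hr1 (F_nonneg hs0 φ) (F_le_one hs0 hs1 φ) hθ0 hθ1 hφ0 hφ1,
      perp_vec_iff (F_nonneg hr0 θ) (F_le_one hr0 hr1 θ) hs0 hs1 hθ0 hθ1 hφ0 hφ1]
    exact key_equiv hr0 hr1 hs0 hs1 hθ0 hθ1 hφ0 hφ1
  · -- (iii)
    intro p hperp
    obtain ⟨r, θ, hr0, hr1, hθ0, hθ1, hfp, hp⟩ := canonical p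
    rw [hfp] at hperp
    conv at hperp => rw [hp]
    rw [perp_vec_iff (F_nonneg hr0 θ) (F_le_one hr0 hr1 θ) hr0 hr1 hθ0 hθ1 hθ0 hθ1] at hperp
    obtain ⟨h1, h2⟩ := hperp
    rcases h2 with h2 | h2
    · rcases mul_eq_zero.mp h2 with h | h
      · subst h
        rw [F_zero] at h1
        norm_num at h1
      · have hr' : r = 0 := (F_eq_zero_iff hr0 hr1 θ).mp h
        subst hr'
        rw [F_zero] at h1
        norm_num at h1
    · rw [sub_self, abs_zero] at h2
      linarith


end
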